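/- Let Φ : (ℝ\{0\}) × ℝ⁺ → (ℝ\{0\}) × ℝ⁺ be given by Φ(A,B) = (24A⁷B⁻⁶ + 24A⁴B⁻³, 4A + 24A⁴B⁻³ + 4A⁻²B³). Then Φ maps each pair (A,B) with A·B > 0 to a pair (X,Y) with X·Y > 0 and sign(X) = sign(A), and Φ restricted to the set {A > 0, B > 0} is a bijection onto {X > 0, Y > 0}. -/

import Mathlib

open Set

private lemma stmt14_mono (u v : ℝ) (hu : 0 < u) (hv : 0 < v) (huv : u < v) :
    u^2*(u+1)*(6*v^2+v+1) < v^2*(v+1)*(6*u^2+u+1) := by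
  nlinarith [mul_pos hu hv, mul_pos (mul_pos hu hv) (sub_pos.2 huv),
    mul_pos (mul_pos (mul_pos hu hu) (mul_pos hv hv)) (sub_pos.2 huv),
    mul_pos (mul_pos (mul_pos hu hv) (add_pos hu hv)) (sub_pos.2 huv),
    mul_pos (sub_pos.2 huv) (add_pos (add_pos (mul_pos hv hv) (mul_pos hu hv)) (mul_pos hu hu)),
    mul_pos (mul_pos (sub_pos.2 huv) (add_pos hu hv)) (mul_pos hu hv)]

private lemma stmt14_ratio_eq (a a' u v : ℝ) (ha : 0 < a) (ha' : 0 < a') (hu : 0 < u) (hv : 0 < v)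
    (e3 : (24*a*u^2+24*a*u)*(4*a'+24*a'*v+4*a'/v) = (24*a'*v^2+24*a'*v)*(4*a+24*a*u+4*a/u)) :
    u^2*(u+1)*(6*v^2+v+1) = v^2*(v+1)*(6*u^2+u+1) := by
  have h96 : (96:ℝ)*a*a' ≠ 0 := by positivity
  apply mul_left_cancel₀ h96
  field_simp at e3
  linear_combination 24*a*a'*e3

private lemma stmt14_exists_root (X Y : ℝ) (hX : 0 < X) (hY : 0 < Y) :
    ∃ c : ℝ, 0 < c ∧ 6*Y*c^3 + 6*(Y-X)*c^2 - X*c - X = 0 := by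
  set f : ℝ → ℝ := fun s => 6*Y*s^3 + 6*(Y-X)*s^2 - X*s - X with hf
  set s₀ : ℝ := 1 + 2*X/Y with hs₀
  have hd : 0 ≤ 2*X/Y := by positivity
  have hs1 : (1:ℝ) ≤ s₀ := by rw [hs₀]; linarith
  have hs0 : (0:ℝ) ≤ s₀ := by linarith
  have hfs₀ : 0 ≤ f s₀ := by
    have hYs : 8*X ≤ 6*Y*s₀ := by
      rw [hs₀, mul_add]
      have : 6*Y*(2*X/Y) = 12*X := by field_simp; ring
      nlinarith
    have h2 : X*s₀ ≤ X*s₀^2 := by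
      nlinarith [mul_nonneg hX.le (mul_nonneg hs0 (by linarith : (0:ℝ) ≤ s₀ - 1))]
    have h3 : X ≤ X*s₀^2 := by nlinarith
    have h4 : 0 ≤ s₀^2*(6*Y*s₀ - 8*X) := mul_nonneg (sq_nonneg _) (by linarith)
    simp only [hf]
    nlinarith
  have hcont : ContinuousOn f (Icc 0 s₀) := by
    apply Continuous.continuousOn; fun_prop
  have hmem : (0:ℝ) ∈ Icc (f 0) (f s₀) := by
    constructor
    · simp only [hf]; norm_num; linarith
    · exact hfs₀
  obtain ⟨c, hcmem, hfc⟩ := intermediate_value_Icc hs0 hcont hmem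
  have hcpos : 0 < c := by
    rcases hcmem.1.lt_or_eq with h | h
    · exact h
    · exfalso; rw [← h] at hfc; simp only [hf] at hfc; norm_num at hfc; linarith
  exact ⟨c, hcpos, hfc⟩

private lemma stmt14_surj_aux (X Y : ℝ) (hX : 0 < X) (hY : 0 < Y) :
    ∃ a b : ℝ, 0 < a ∧ 0 < b ∧
      24*a^7*(b^6)⁻¹ + 24*a^4*(b^3)⁻¹ = X ∧
      4*a + 24*a^4*(b^3)⁻¹ + 4*(a^2)⁻¹*b^3 = Y := by
  obtain ⟨c, hc, hfc⟩ := stmt14_exists_root X Y hX hY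
  set a : ℝ := X/(24*c*(c+1)) with ha_def
  have ha : 0 < a := by rw [ha_def]; positivity
  have haX : 24*c*(c+1)*a = X := by rw [ha_def]; field_simp
  set b : ℝ := a / c^((1:ℝ)/3) with hb_def
  have hb : 0 < b := by
    rw [hb_def]; exact div_pos ha (Real.rpow_pos_of_pos hc _)
  have hb3 : b^3 = a^3/c := by
    rw [hb_def, div_pow]
    congr 1
    rw [← Real.rpow_natCast (c^((1:ℝ)/3)) 3, ← Real.rpow_mul hc.le]
    norm_num
  have hb6 : b^6 = a^6/c^2 := by
    have h : b^6 = (b^3)^2 := by ring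
    rw [h, hb3, div_pow]; ring
  have key : Y*c = 24*a*c^2 + 4*a*c + 4*a := by
    have h6 : (6*c^2*(c+1)) ≠ 0 := by positivity
    apply mul_left_cancel₀ h6
    linear_combination c*hfc - c*(6*c^2+c+1)*haX
  refine ⟨a, b, ha, hb, ?_, ?_⟩
  · rw [hb3, hb6]
    have h : 24*a^7*(a^6/c^2)⁻¹ + 24*a^4*(a^3/c)⁻¹ = 24*a*c^2 + 24*a*c := by
      field_simp
    rw [h]; linear_combination haX
  · rw [hb3]
    have h : 4*a + 24*a^4*(a^3/c)⁻¹ + 4*(a^2)⁻¹*(a^3/c) = (24*a*c^2+4*a*c+4*a)/c := by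
      field_simp; ring
    rw [h, ← key, mul_div_assoc, div_self hc.ne', mul_one]

/-- The map
`Φ(A,B) = (24A⁷B⁻⁶ + 24A⁴B⁻³, 4A + 24A⁴B⁻³ + 4A⁻²B³)` sends each pair `(A,B)`
with `A ≠ 0`, `B > 0` and `A·B > 0` to a pair `(X,Y)` with `X·Y > 0` and
`sign(X) = sign(A)`, and restricted to the positive quadrant it is a bijection
onto the positive quadrant. -/
theorem stmt14 :
    (∀ A B : ℝ, A ≠ 0 → 0 < B → 0 < A * B →
      0 < (24 * A ^ 7 * B ^ (-6 : ℤ) + 24 * A ^ 4 * B ^ (-3 : ℤ)) *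
          (4 * A + 24 * A ^ 4 * B ^ (-3 : ℤ) + 4 * A ^ (-2 : ℤ) * B ^ 3) ∧
      (0 < 24 * A ^ 7 * B ^ (-6 : ℤ) + 24 * A ^ 4 * B ^ (-3 : ℤ) ↔ 0 < A)) ∧
    BijOn
      (fun p : ℝ × ℝ =>
        ((24 * p.1 ^ 7 * p.2 ^ (-6 : ℤ) + 24 * p.1 ^ 4 * p.2 ^ (-3 : ℤ)),
         (4 * p.1 + 24 * p.1 ^ 4 * p.2 ^ (-3 : ℤ) + 4 * p.1 ^ (-2 : ℤ) * p.2 ^ 3)))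
      {p : ℝ × ℝ | 0 < p.1 ∧ 0 < p.2} {p : ℝ × ℝ | 0 < p.1 ∧ 0 < p.2} := by
  have comp_pos : ∀ A B : ℝ, 0 < A → 0 < B →
      0 < 24 * A ^ 7 * (B ^ 6)⁻¹ + 24 * A ^ 4 * (B ^ 3)⁻¹ ∧
      0 < 4 * A + 24 * A ^ 4 * (B ^ 3)⁻¹ + 4 * (A ^ 2)⁻¹ * B ^ 3 := by
    intro A B hA hB
    constructor
    · have h1 : 0 < 24 * A ^ 7 * (B ^ 6)⁻¹ :=
        mul_pos (mul_pos (by norm_num) (pow_pos hA 7)) (inv_pos.2 (pow_pos hB 6))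
      have h2 : 0 < 24 * A ^ 4 * (B ^ 3)⁻¹ :=
        mul_pos (mul_pos (by norm_num) (pow_pos hA 4)) (inv_pos.2 (pow_pos hB 3))
      linarith
    · have h1 : 0 < 4 * A := by linarith
      have h2 : 0 < 24 * A ^ 4 * (B ^ 3)⁻¹ :=
        mul_pos (mul_pos (by norm_num) (pow_pos hA 4)) (inv_pos.2 (pow_pos hB 3))
      have h3 : 0 < 4 * (A ^ 2)⁻¹ * B ^ 3 :=
        mul_pos (mul_pos (by norm_num) (inv_pos.2 (pow_pos hA 2))) (pow_pos hB 3)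
      linarith
  constructor
  · intro A B hA hB hAB
    have hA' : 0 < A := by nlinarith
    simp only [zpow_neg, zpow_ofNat]
    obtain ⟨hx, hy⟩ := comp_pos A B hA' hB
    exact ⟨mul_pos hx hy, ⟨fun _ => hA', fun _ => hx⟩⟩
  · refine ⟨?_, ?_, ?_⟩
    · rintro ⟨a, b⟩ ⟨ha, hb⟩
      simp only [mem_setOf_eq] at *
      simp only [zpow_neg, zpow_ofNat]
      exact comp_pos a b ha hb
    · rintro ⟨a, b⟩ ⟨ha, hb⟩ ⟨a', b'⟩ ⟨ha', hb'⟩ heq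
      simp only [mem_setOf_eq] at ha hb ha' hb'
      simp only [zpow_neg, zpow_ofNat, Prod.mk.injEq] at heq
      obtain ⟨h1, h2⟩ := heq
      set u : ℝ := a^3/b^3 with hu
      set v : ℝ := a'^3/b'^3 with hv
      have hu0 : 0 < u := by rw [hu]; positivity
      have hv0 : 0 < v := by rw [hv]; positivity
      have c1 : 24*a^7*(b^6)⁻¹ + 24*a^4*(b^3)⁻¹ = 24*a*u^2+24*a*u := by
        simp only [hu]; field_simp
      have c1' : 24*a'^7*(b'^6)⁻¹ + 24*a'^4*(b'^3)⁻¹ = 24*a'*v^2+24*a'*v := by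
        simp only [hv]; field_simp
      have c2 : 4*a + 24*a^4*(b^3)⁻¹ + 4*(a^2)⁻¹*b^3 = 4*a+24*a*u+4*a/u := by
        simp only [hu]; rw [div_div_eq_mul_div]; field_simp
      have c2' : 4*a' + 24*a'^4*(b'^3)⁻¹ + 4*(a'^2)⁻¹*b'^3 = 4*a'+24*a'*v+4*a'/v := by
        simp only [hv]; rw [div_div_eq_mul_div]; field_simp
      have e1 : 24*a*u^2+24*a*u = 24*a'*v^2+24*a'*v := by
        rw [← c1, ← c1']; linear_combination h1
      have e2 : 4*a+24*a*u+4*a/u = 4*a'+24*a'*v+4*a'/v := by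
        rw [← c2, ← c2']; linear_combination h2
      have e3 : (24*a*u^2+24*a*u)*(4*a'+24*a'*v+4*a'/v)
          = (24*a'*v^2+24*a'*v)*(4*a+24*a*u+4*a/u) := by rw [e1, e2]
      have e4 := stmt14_ratio_eq a a' u v ha ha' hu0 hv0 e3
      have huv : u = v := by
        rcases lt_trichotomy u v with h | h | h
        · exact absurd e4 (ne_of_lt (stmt14_mono u v hu0 hv0 h))
        · exact h
        · exact absurd e4.symm (ne_of_lt (stmt14_mono v u hv0 hu0 h))
      have haa : a = a' := by
        rw [huv] at e1
        have hne : (24:ℝ)*(v^2+v) ≠ 0 := by positivity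
        have : a*(24*(v^2+v)) = a'*(24*(v^2+v)) := by linear_combination e1
        exact mul_right_cancel₀ hne this
      have hbb : b = b' := by
        have h := hu.symm.trans (huv.trans hv)
        rw [← haa] at h
        field_simp at h
        exact (pow_left_inj₀ hb.le hb'.le (by norm_num : (3:ℕ) ≠ 0)).1 h.symm
      simp only [Prod.mk.injEq]
      exact ⟨haa, hbb⟩
    · rintro ⟨X, Y⟩ ⟨hX, hY⟩
      simp only [mem_setOf_eq] at hX hY
      obtain ⟨a, b, ha, hb, hx, hy⟩ := stmt14_surj_aux X Y hX hY
      refine ⟨(a, b), ⟨ha, hb⟩, ?_⟩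
      simp only [zpow_neg, zpow_ofNat, Prod.mk.injEq]
      exact ⟨hx, hy⟩
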